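/- Let G be a finite group. The order of any finite subgroup of V(ZG) divides the order of G. -/

import Mathlib

open scoped Classical
open Finset LinearMap

/-- The partial augmentation of `u ∈ ℤG` at (the conjugacy class of) `x ∈ G`. -/
noncomputable def partialAug {G : Type*} [Group G] [Fintype G]
    (x : G) (u : MonoidAlgebra ℤ G) : ℤ :=
  ∑ g : G, if IsConj x g then u.coeff g else 0

/-- The augmentation ring homomorphism `ℤG → ℤ`. -/
noncomputable def augMap (G : Type*) [Group G] : MonoidAlgebra ℤ G →+* ℤ :=
  MonoidAlgebra.liftNCRingHom (RingHom.id ℤ) (1 : G →* ℤ) (fun _ _ => Commute.all _ _)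

/-- `V(ℤG)`, the group of units of augmentation one in `ℤG`. -/
noncomputable def V (G : Type*) [Group G] : Subgroup (MonoidAlgebra ℤ G)ˣ :=
  (Units.map (augMap G).toMonoidHom).ker


section PJ
variable {K : Type*} [Field K] {A : Type*} [Ring A] [Algebra K A]

noncomputable def pj (m : ℕ) (ω : K) (v : A) (j : ℕ) : A :=
  (m : K)⁻¹ • ∑ l ∈ range m, ((ω⁻¹) ^ (j * l)) • v ^ l

variable {m : ℕ} {ω : K} {v : A}

lemma pj_sum (hm : 0 < m) (hmK : (m : K) ≠ 0) (hωm : ω ^ m = 1)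
    (hωl : ∀ l, 0 < l → l < m → ω ^ l ≠ 1) :
    ∑ j ∈ range m, pj m ω v j = 1 := by
  have key : ∀ l ∈ range m, l ≠ 0 → (∑ j ∈ range m, ((ω⁻¹) ^ l) ^ j) = 0 := by
    intro l hl hl0
    have hζ : (ω⁻¹) ^ l ≠ 1 := by
      rw [inv_pow, ne_eq, inv_eq_one]
      exact hωl l (Nat.pos_of_ne_zero hl0) (mem_range.mp hl)
    have hζm : ((ω⁻¹) ^ l) ^ m = 1 := by
      rw [inv_pow, inv_pow, ← pow_mul, mul_comm, pow_mul, hωm, one_pow, inv_one]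
    rw [geom_sum_eq hζ, hζm, sub_self, zero_div]
  calc ∑ j ∈ range m, pj m ω v j
      = (m : K)⁻¹ • ∑ j ∈ range m, ∑ l ∈ range m, ((ω⁻¹) ^ (j*l)) • v ^ l := by
        rw [Finset.smul_sum]; rfl
    _ = (m : K)⁻¹ • ∑ l ∈ range m, (∑ j ∈ range m, ((ω⁻¹) ^ l) ^ j) • v ^ l := by
        rw [Finset.sum_comm]
        congr 1
        refine Finset.sum_congr rfl fun l _ => ?_
        rw [Finset.sum_smul]
        refine Finset.sum_congr rfl fun j _ => ?_
        rw [← pow_mul, mul_comm]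
    _ = (m : K)⁻¹ • ((m : K) • v ^ 0) := by
        congr 1
        rw [Finset.sum_eq_single 0]
        · simp
        · intro l hl hl0
          rw [key l hl hl0, zero_smul]
        · intro h; exact absurd (mem_range.mpr hm) h
    _ = 1 := by rw [smul_smul, inv_mul_cancel₀ hmK, one_smul, pow_zero]

lemma pj_mul_left (hvm : v ^ m = 1) (hωm : ω ^ m = 1) (hω0 : ω ≠ 0) (j : ℕ) :
    v * pj m ω v j = (ω ^ j) • pj m ω v j := by
  set f : ℕ → A := fun l => (ω ^ j * (ω⁻¹) ^ (j * l)) • v ^ l with hfdef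
  have hf0m : f m = f 0 := by
    simp only [hfdef, hvm, Nat.mul_zero, pow_zero, mul_one]
    congr 1
    rw [mul_comm j m, pow_mul, inv_pow, hωm, inv_one, one_pow, mul_one]
  have hstep : ∀ l, f (l + 1) = ((ω⁻¹) ^ (j * l)) • v ^ (l+1) := by
    intro l
    simp only [hfdef]
    congr 1
    rw [Nat.mul_succ, pow_add, mul_comm ((ω⁻¹) ^ (j*l)), ← mul_assoc, inv_pow,
      mul_inv_cancel₀ (pow_ne_zero _ hω0), one_mul]
  have hshift : ∑ l ∈ range m, f (l + 1) = ∑ l ∈ range m, f l := by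
    have h1 := Finset.sum_range_succ' f m
    have h2 := Finset.sum_range_succ f m
    rw [hf0m] at h2
    rw [h2] at h1
    exact (add_right_cancel h1).symm
  calc v * pj m ω v j
      = (m : K)⁻¹ • ∑ l ∈ range m, ((ω⁻¹) ^ (j * l)) • v ^ (l+1) := by
        rw [pj, mul_smul_comm, Finset.mul_sum]
        congr 1
        refine Finset.sum_congr rfl fun l _ => ?_
        rw [mul_smul_comm, ← pow_succ']
    _ = (m : K)⁻¹ • ∑ l ∈ range m, f l := by rw [← hshift]; simp only [hstep]
    _ = (ω ^ j) • pj m ω v j := by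
        rw [pj]
        simp only [hfdef, mul_smul]
        rw [← Finset.smul_sum, smul_comm]

lemma pj_pow_mul_left (hvm : v ^ m = 1) (hωm : ω ^ m = 1) (hω0 : ω ≠ 0) (j l : ℕ) :
    v ^ l * pj m ω v j = ((ω ^ j) ^ l) • pj m ω v j := by
  induction l with
  | zero => simp
  | succ l ih =>
      rw [pow_succ, mul_assoc, pj_mul_left hvm hωm hω0 j, mul_smul_comm, ih, smul_smul,
        ← pow_succ']

lemma pj_idem (hmK : (m : K) ≠ 0) (hvm : v ^ m = 1) (hωm : ω ^ m = 1) (hω0 : ω ≠ 0) (j : ℕ) :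
    pj m ω v j * pj m ω v j = pj m ω v j := by
  nth_rewrite 1 [pj]
  rw [smul_mul_assoc, Finset.sum_mul]
  have : ∀ l ∈ range m, ((ω⁻¹) ^ (j*l)) • v ^ l * pj m ω v j = pj m ω v j := by
    intro l _
    rw [smul_mul_assoc, pj_pow_mul_left hvm hωm hω0 j l, smul_smul, ← pow_mul, mul_comm j l,
      ← mul_pow, inv_mul_cancel₀ hω0, one_pow, one_smul]
  rw [Finset.sum_congr rfl this, Finset.sum_const, card_range, ← Nat.cast_smul_eq_nsmul K,
    smul_smul, inv_mul_cancel₀ hmK, one_smul]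

end PJ
open Finset

noncomputable def coeffMap {G : Type*} [Group G] (R : Type*) [CommRing R] :
    MonoidAlgebra ℤ G →+* MonoidAlgebra R G :=
  MonoidAlgebra.liftNCRingHom
    ((algebraMap R (MonoidAlgebra R G)).comp (Int.castRingHom R))
    (MonoidAlgebra.of R G) (fun _ _ => (Algebra.commutes _ _))

lemma coeffMap_single {G : Type*} [Group G] (R : Type*) [CommRing R] (a : G) (b : ℤ) :
    coeffMap R (MonoidAlgebra.single a b) = MonoidAlgebra.single a ((b : R)) := by
  classical
  simp only [coeffMap, MonoidAlgebra.liftNCRingHom, RingHom.coe_mk, MonoidHom.coe_mk,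
    OneHom.coe_mk, AddMonoidHom.toFun_eq_coe, AddMonoidHom.coe_coe, MonoidAlgebra.liftNC_single]
  rw [RingHom.comp_apply]
  simp [MonoidAlgebra.of_apply, Algebra.algebraMap_eq_smul_one]
  rw [MonoidAlgebra.intCast_def, MonoidAlgebra.single_mul_single, one_mul, mul_one]

lemma coeffMap_apply {G : Type*} [Group G] (R : Type*) [CommRing R]
    (u : MonoidAlgebra ℤ G) (x : G) : (coeffMap R u).coeff x = ((u.coeff x : ℤ) : R) := by
  classical
  induction u using MonoidAlgebra.induction_linear with
  | zero => simp
  | add f g hf hg =>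
      rw [map_add, MonoidAlgebra.coeff_add, Finsupp.add_apply, hf, hg, MonoidAlgebra.coeff_add,
        Finsupp.add_apply, Int.cast_add]
  | single a b =>
      rw [coeffMap_single]
      by_cases h : a = x <;> simp [Finsupp.single_apply, h]
open Finset LinearMap

noncomputable instance MA.finite {G : Type*} [Group G] [Fintype G] (k : Type*) [Field k] :
    Module.Finite k (MonoidAlgebra k G) :=
  Module.Finite.of_basis (MonoidAlgebra.basis G k)

lemma trace_mulLeft {G : Type*} [Group G] [Fintype G] {k : Type*} [Field k]
    (a : MonoidAlgebra k G) :
    LinearMap.trace k _ (LinearMap.mulLeft k a) = (Fintype.card G : k) * a.coeff 1 := by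
  classical
  let b : Module.Basis G k (MonoidAlgebra k G) := MonoidAlgebra.basis G k
  rw [LinearMap.trace_eq_matrix_trace k b, Matrix.trace]
  have : ∀ g : G, (LinearMap.toMatrix b b (LinearMap.mulLeft k a)) g g = a.coeff 1 := by
    intro g
    rw [LinearMap.toMatrix_apply]
    simp only [b, MonoidAlgebra.basis_apply, LinearMap.mulLeft_apply]
    show (a * MonoidAlgebra.single g 1 : MonoidAlgebra k G).coeff g = a.coeff 1
    rw [MonoidAlgebra.coeff_mul_single_apply]
    simp
  simp [Matrix.diag, this, mul_comm]

lemma idem_rank {G : Type*} [Group G] [Fintype G] {k : Type*} [Field k]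
    (a : MonoidAlgebra k G) (ha : a * a = a) :
    ∃ r : ℕ, (Fintype.card G : k) * a.coeff 1 = r ∧ (r = 0 → a = 0) := by
  classical
  set f := LinearMap.mulLeft k a with hf
  have hproj : LinearMap.IsProj (LinearMap.range f) f := by
    constructor
    · intro x; exact ⟨x, rfl⟩
    · rintro x ⟨y, rfl⟩
      show a * (a * y) = a * y
      rw [← mul_assoc, ha]
  refine ⟨Module.finrank k (LinearMap.range f), ?_, ?_⟩
  · rw [← trace_mulLeft a, ← hf, hproj.trace]
  · intro hr
    have hbot : LinearMap.range f = ⊥ := Submodule.finrank_eq_zero.mp hr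
    have : f 1 = 0 := by
      have : f 1 ∈ LinearMap.range f := ⟨1, rfl⟩
      rwa [hbot, Submodule.mem_bot] at this
    simpa [hf] using this
lemma augMap_single {G : Type*} [Group G] (a : G) (b : ℤ) :
    augMap G (MonoidAlgebra.single a b) = b := by
  classical
  simp only [augMap, MonoidAlgebra.liftNCRingHom, RingHom.coe_mk, MonoidHom.coe_mk,
    OneHom.coe_mk, AddMonoidHom.toFun_eq_coe, AddMonoidHom.coe_coe, MonoidAlgebra.liftNC_single]
  simp

lemma coeffMap_injective {G : Type*} [Group G] (R : Type*) [CommRing R] [CharZero R] :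
    Function.Injective (coeffMap (G := G) R) := by
  intro x y hxy
  ext g
  have := congrArg (fun z : MonoidAlgebra R G => z.coeff g) hxy
  simpa only [coeffMap_apply, Int.cast_injective.eq_iff] using this

lemma coe_one_apply {G : Type*} [Group G] {k : Type*} [CommRing k] :
    (1 : MonoidAlgebra k G).coeff 1 = 1 := by
  rw [MonoidAlgebra.one_def, MonoidAlgebra.coeff_single, Finsupp.single_eq_same]

lemma smul_one_eq_single {G : Type*} [Group G] {k : Type*} [CommRing k] (c : k) :
    c • (1 : MonoidAlgebra k G) = MonoidAlgebra.single 1 c := by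
  rw [MonoidAlgebra.one_def, MonoidAlgebra.smul_single', mul_one]

set_option maxHeartbeats 1000000 in
lemma berman_higman {G : Type*} [Group G] [Fintype G]
    (u : (MonoidAlgebra ℤ G)ˣ) (hord : IsOfFinOrder u)
    (ha : (u : MonoidAlgebra ℤ G).coeff 1 ≠ 0) :
    (u : MonoidAlgebra ℤ G) = MonoidAlgebra.single 1 ((u : MonoidAlgebra ℤ G).coeff 1) := by
  classical
  set m := orderOf u with hmdef
  have hm : 0 < m := hord.orderOf_pos
  set v : MonoidAlgebra ℂ G := coeffMap ℂ (u : MonoidAlgebra ℤ G) with hvdef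
  have hvm : v ^ m = 1 := by
    rw [hvdef, ← map_pow, ← Units.val_pow_eq_pow_val, pow_orderOf_eq_one, Units.val_one, map_one]
  set ω : ℂ := Complex.exp (2 * Real.pi * Complex.I / m) with hωdef
  have hω : IsPrimitiveRoot ω m := Complex.isPrimitiveRoot_exp m hm.ne'
  have hωm : ω ^ m = 1 := hω.pow_eq_one
  have habsω : ‖ω‖ = 1 := by
    have h1 : ‖ω‖ ^ m = 1 := by
      rw [← norm_pow, hωm, norm_one]
    rcases (pow_eq_one_iff_cases).mp h1 with h | h | h
    · omega
    · exact h
    · nlinarith [norm_nonneg ω]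
  have hω0 : ω ≠ 0 := fun h => by simp [h] at habsω
  have hmC : (m : ℂ) ≠ 0 := Nat.cast_ne_zero.mpr hm.ne'
  set P : ℕ → MonoidAlgebra ℂ G := pj m ω v with hPdef
  have hsum : ∑ j ∈ range m, P j = 1 :=
    pj_sum hm hmC hωm (fun l h1 h2 => hω.pow_ne_one_of_pos_of_lt h1.ne' h2)
  obtain ⟨r, hr1, hr2⟩ : ∃ r : ℕ → ℕ, (∀ j, (Fintype.card G : ℂ) * (P j).coeff 1 = r j) ∧
      (∀ j, r j = 0 → P j = 0) := by
    choose r h1 h2 using fun j => idem_rank (P j) (pj_idem hmC hvm hωm hω0 j)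
    exact ⟨r, h1, h2⟩
  have hsum1 : ∑ j ∈ range m, (P j).coeff 1 = 1 := by
    have h2 := (Finsupp.finset_sum_apply (range m) (fun j => (P j).coeff) (1:G)).symm
    rw [h2, ← MonoidAlgebra.coeff_sum (range m) P, hsum, coe_one_apply]
  have hrsum : ∑ j ∈ range m, (r j : ℂ) = (Fintype.card G : ℂ) := by
    calc ∑ j ∈ range m, (r j : ℂ) = ∑ j ∈ range m, (Fintype.card G : ℂ) * (P j).coeff 1 :=
          Finset.sum_congr rfl fun j _ => (hr1 j).symm
      _ = (Fintype.card G : ℂ) * ∑ j ∈ range m, (P j).coeff 1 := by rw [Finset.mul_sum]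
      _ = _ := by rw [hsum1, mul_one]
  have hrsumN : ∑ j ∈ range m, r j = Fintype.card G := by
    have h : ((∑ j ∈ range m, r j : ℕ) : ℂ) = ((Fintype.card G : ℕ) : ℂ) := by
      push_cast
      exact hrsum
    exact_mod_cast h
  have hvdec : v = ∑ j ∈ range m, (ω ^ j) • P j := by
    calc v = v * 1 := (mul_one v).symm
      _ = ∑ j ∈ range m, v * P j := by rw [← hsum, Finset.mul_sum]
      _ = _ := Finset.sum_congr rfl fun j _ => pj_mul_left hvm hωm hω0 j
  set a : ℤ := (u : MonoidAlgebra ℤ G).coeff 1 with hadef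
  have hva : v.coeff 1 = (a : ℂ) := coeffMap_apply ℂ _ _
  have hv1' : v.coeff 1 = ∑ j ∈ range m, ω ^ j * (P j).coeff 1 := by
    conv_lhs => rw [hvdec]
    rw [MonoidAlgebra.coeff_sum, Finsupp.finset_sum_apply]
    exact Finset.sum_congr rfl fun j _ => by
      rw [MonoidAlgebra.coeff_smul, Finsupp.smul_apply, smul_eq_mul]
  have hv1 : (Fintype.card G : ℂ) * (a : ℂ) = ∑ j ∈ range m, ω ^ j * (r j : ℂ) := by
    rw [← hva, hv1', Finset.mul_sum]
    refine Finset.sum_congr rfl fun j _ => ?_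
    rw [← hr1 j]
    ring
  have hcard0 : 0 < Fintype.card G := Fintype.card_pos
  have habsj : ∀ j, ‖ω ^ j * (r j : ℂ)‖ = (r j : ℝ) := by
    intro j
    rw [norm_mul, norm_pow, habsω, one_pow, one_mul, Complex.norm_natCast]
  have htri : ‖∑ j ∈ range m, ω ^ j * (r j : ℂ)‖ ≤ (Fintype.card G : ℝ) := by
    calc ‖∑ j ∈ range m, ω ^ j * (r j : ℂ)‖
        ≤ ∑ j ∈ range m, ‖ω ^ j * (r j : ℂ)‖ := norm_sum_le _ _
      _ = ∑ j ∈ range m, (r j : ℝ) := Finset.sum_congr rfl fun j _ => habsj j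
      _ = (Fintype.card G : ℝ) := by rw [← Nat.cast_sum, hrsumN]
  have haout : a = 1 ∨ a = -1 := by
    have h1 : ‖(Fintype.card G : ℂ) * (a : ℂ)‖ ≤ (Fintype.card G : ℝ) := by
      rw [hv1]; exact htri
    rw [norm_mul, Complex.norm_natCast, Complex.norm_intCast] at h1
    have h2 : |(a : ℝ)| ≤ 1 := by
      have hc : (0:ℝ) < (Fintype.card G : ℝ) := by exact_mod_cast hcard0
      nlinarith
    have h3 : |a| ≤ 1 := by
      rw [← Int.cast_abs] at h2
      exact_mod_cast h2
    have h4 := abs_le.mp h3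
    omega
  set ε : ℂ := (a : ℂ) with hεdef
  have hε2 : ε * ε = 1 := by
    rcases haout with h | h <;> rw [hεdef, h] <;> norm_num
  have hεabs : ‖ε‖ = 1 := by
    rcases haout with h | h <;> rw [hεdef, h] <;> norm_num
  have hmain : (Fintype.card G : ℂ) = ∑ j ∈ range m, (ε * ω ^ j) * (r j : ℂ) := by
    calc (Fintype.card G : ℂ) = ((Fintype.card G : ℂ) * ε) * ε := by
          rw [mul_assoc, hε2, mul_one]
      _ = (∑ j ∈ range m, ω ^ j * (r j : ℂ)) * ε := by rw [hv1]
      _ = _ := by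
          rw [Finset.sum_mul]
          exact Finset.sum_congr rfl fun j _ => by ring
  have hre : (Fintype.card G : ℝ) = ∑ j ∈ range m, (ε * ω ^ j).re * (r j : ℝ) := by
    have h := congrArg Complex.re hmain
    simpa [Complex.re_sum, Complex.mul_re] using h
  have hre_le : ∀ j, (ε * ω ^ j).re ≤ 1 := by
    intro j
    refine le_trans (Complex.re_le_norm _) ?_
    rw [norm_mul, hεabs, norm_pow, habsω, one_pow, mul_one]
  have hzero : ∀ j ∈ range m, (1 - (ε * ω ^ j).re) * (r j : ℝ) = 0 := by
    have hsz : ∑ j ∈ range m, (1 - (ε * ω ^ j).re) * (r j : ℝ) = 0 := by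
      have expand : ∀ j ∈ range m, (1 - (ε * ω ^ j).re) * (r j : ℝ)
          = (r j : ℝ) - (ε * ω ^ j).re * (r j : ℝ) := fun j _ => by ring
      rw [Finset.sum_congr rfl expand, Finset.sum_sub_distrib, ← Nat.cast_sum, hrsumN, ← hre,
        sub_self]
    refine (Finset.sum_eq_zero_iff_of_nonneg ?_).mp hsz
    intro j _
    have := hre_le j
    have : (0:ℝ) ≤ 1 - (ε * ω ^ j).re := by linarith
    positivity
  have hPj0 : ∀ j ∈ range m, ω ^ j ≠ ε → P j = 0 := by
    intro j hj hne
    apply hr2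
    rcases mul_eq_zero.mp (hzero j hj) with h | h
    · exfalso
      apply hne
      have hre1 : (ε * ω ^ j).re = 1 := by linarith
      have habs1 : ‖ε * ω ^ j‖ = 1 := by
        rw [norm_mul, hεabs, norm_pow, habsω, one_pow, mul_one]
      have hone : ε * ω ^ j = 1 := by
        have hsq := Complex.sq_norm (ε * ω ^ j)
        rw [habs1, Complex.normSq_apply, hre1] at hsq
        have him : (ε * ω ^ j).im = 0 := by nlinarith
        exact Complex.ext (by rw [hre1, Complex.one_re]) (by rw [him, Complex.one_im])
      calc ω ^ j = (ε * ε) * ω ^ j := by rw [hε2, one_mul]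
        _ = ε * (ε * ω ^ j) := by ring
        _ = ε := by rw [hone, mul_one]
    · exact_mod_cast h
  have hfinal : v = ε • (1 : MonoidAlgebra ℂ G) := by
    have hdiff : v - ε • (1 : MonoidAlgebra ℂ G) = 0 := by
      rw [hvdec, ← hsum, Finset.smul_sum, ← Finset.sum_sub_distrib]
      apply Finset.sum_eq_zero
      intro j hj
      by_cases h : ω ^ j = ε
      · rw [h, sub_self]
      · rw [hPj0 j hj h, smul_zero, smul_zero, sub_self]
    exact sub_eq_zero.mp hdiff
  have hcoe : coeffMap ℂ ((u : MonoidAlgebra ℤ G)) = coeffMap ℂ (MonoidAlgebra.single 1 a) := by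
    rw [coeffMap_single, ← smul_one_eq_single, ← hεdef, ← hfinal, hvdef]
  exact coeffMap_injective ℂ hcoe

/-- The order of any finite subgroup of `V(ℤG)` divides the order of `G`. -/
theorem stmt14 {G : Type*} [Group G] [Fintype G]
    (H : Subgroup (MonoidAlgebra ℤ G)ˣ) (hHV : H ≤ V G) (hfin : Finite H) :
    Nat.card H ∣ Nat.card G := by
  classical
  haveI : Finite (↥H) := hfin
  haveI := Fintype.ofFinite (↥H)
  set n := Fintype.card (↥H) with hndef
  have hn0 : (n : ℚ) ≠ 0 := Nat.cast_ne_zero.mpr Fintype.card_ne_zero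
  -- Berman-Higman consequence: nontrivial elements of H have vanishing coefficient at 1
  have hcoeff : ∀ h : ↥H, (h : (MonoidAlgebra ℤ G)ˣ) ≠ 1 →
      ((h : (MonoidAlgebra ℤ G)ˣ) : MonoidAlgebra ℤ G).coeff 1 = 0 := by
    intro h hne
    by_contra h0
    have hordH : IsOfFinOrder h := isOfFinOrder_of_finite h
    have hord : IsOfFinOrder ((h : (MonoidAlgebra ℤ G)ˣ)) := by
      obtain ⟨k, hk, hk1⟩ := isOfFinOrder_iff_pow_eq_one.mp hordH
      refine isOfFinOrder_iff_pow_eq_one.mpr ⟨k, hk, ?_⟩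
      have := congrArg (fun x : ↥H => (x : (MonoidAlgebra ℤ G)ˣ)) hk1
      simpa using this
    have heq := berman_higman _ hord h0
    have hmem : (h : (MonoidAlgebra ℤ G)ˣ) ∈ V G := hHV h.2
    have haug : augMap G (((h : (MonoidAlgebra ℤ G)ˣ)) : MonoidAlgebra ℤ G) = 1 := by
      rw [V, MonoidHom.mem_ker] at hmem
      have := congrArg Units.val hmem
      simpa using this
    rw [heq, augMap_single] at haug
    apply hne
    apply Units.ext
    rw [heq, haug]
    exact (MonoidAlgebra.one_def).symm
  -- the averaged idempotent
  set w : ↥H → MonoidAlgebra ℚ G :=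
    fun h => coeffMap ℚ (((h : (MonoidAlgebra ℤ G)ˣ)) : MonoidAlgebra ℤ G) with hwdef
  have hwmul : ∀ g h : ↥H, w g * w h = w (g * h) := by
    intro g h
    rw [hwdef]
    dsimp only
    rw [← map_mul]
    norm_cast
  set c : MonoidAlgebra ℚ G := ∑ h : ↥H, w h with hcdef
  have hcc : c * c = n • c := by
    rw [hcdef, Finset.sum_mul]
    have : ∀ g : ↥H, g ∈ Finset.univ → w g * (∑ h : ↥H, w h) = ∑ h : ↥H, w h := by
      intro g _
      rw [Finset.mul_sum]
      rw [Finset.sum_congr rfl (fun h _ => hwmul g h)]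
      exact Fintype.sum_bijective (fun h => g * h) (Group.mulLeft_bijective g) _ _ (fun h => rfl)
    rw [Finset.sum_congr rfl this, Finset.sum_const, Finset.card_univ]
  have hc1 : c.coeff 1 = 1 := by
    rw [hcdef, MonoidAlgebra.coeff_sum, Finsupp.finset_sum_apply]
    rw [Finset.sum_eq_single (1 : ↥H)]
    · rw [hwdef]
      dsimp only
      rw [coeffMap_apply]
      norm_num [coe_one_apply]
    · intro h _ hne
      rw [hwdef]
      dsimp only
      rw [coeffMap_apply, hcoeff h (by simpa using hne), Int.cast_zero]
    · intro hmem
      exact absurd (Finset.mem_univ _) hmem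
  set e : MonoidAlgebra ℚ G := (n : ℚ)⁻¹ • c with hedef
  have he : e * e = e := by
    rw [hedef, smul_mul_smul_comm, hcc, ← Nat.cast_smul_eq_nsmul ℚ, smul_smul, mul_assoc,
      inv_mul_cancel₀ hn0, mul_one]
  have he1 : e.coeff 1 = (n : ℚ)⁻¹ := by
    rw [hedef, MonoidAlgebra.coeff_smul, Finsupp.smul_apply, hc1, smul_eq_mul, mul_one]
  obtain ⟨r, hr, -⟩ := idem_rank e he
  rw [he1] at hr
  have hcard : Fintype.card G = n * r := by
    have h2 : (Fintype.card G : ℚ) = (n : ℚ) * r := by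
      field_simp at hr ⊢
      linarith [hr]
    exact_mod_cast h2
  rw [Nat.card_eq_fintype_card, Nat.card_eq_fintype_card, hcard]
  exact Dvd.intro r rfl
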